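/- Let n ≥ 2 be an integer with n ≡ 2 (mod 4). For every tournament T on n vertices there exists a set of n dice, each with n − 1 sides (a function X : Fin n → Fin (n−1) → ℕ), that realizes T. -/

import Mathlib

/-- The number of face wins of die `D` over die `E`: the number of pairs `(a, b)`
of faces with `D a > E b`. -/
def faceWins (k : ℕ) (D E : Fin k → ℕ) : ℕ :=
  (Finset.univ.filter (fun p : Fin k × Fin k => D p.1 > E p.2)).card

namespace DiceAux

open Finset


lemma veq {N : ℕ} [NeZero N] (a b : ZMod N) (h : a.val = b.val) : a = b := by
  have := ZMod.natCast_rightInverse (n := N)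
  calc a = ((a.val : ℕ) : ZMod N) := (this a).symm
  _ = ((b.val : ℕ) : ZMod N) := by rw [h]
  _ = b := this b

lemma cast_val {N : ℕ} [NeZero N] (a : ZMod N) : ((a.val : ℕ) : ZMod N) = a :=
  ZMod.natCast_rightInverse a

lemma two_cancel (s : ℕ) (x : ZMod (4*s+1)) (h : 2 * x = 0) : x = 0 := by
  have hx : ((2 * x.val : ℕ) : ZMod (4*s+1)) = 0 := by
    push_cast [cast_val]; exact h
  rw [ZMod.natCast_eq_zero_iff] at hx
  obtain ⟨c, hc⟩ := hx
  have hv : x.val < 4*s+1 := ZMod.val_lt x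
  have hc2 : c < 2 := by
    by_contra hcon
    push_neg at hcon
    have := Nat.mul_le_mul_left (4*s+1) hcon
    omega
  have : x.val = 0 := by interval_cases c <;> omega
  exact veq x 0 (by simpa using this)

/-- block index of an offset residue `d < 4s+1` -/
def gg (s d : ℕ) : ℕ :=
  if d = 0 then s+1 else if min d (4*s+1-d) ≤ s then min d (4*s+1-d) else min d (4*s+1-d)+1

lemma gg_def (s d : ℕ) : gg s d =
    (if d = 0 then s+1 else if min d (4*s+1-d) ≤ s then min d (4*s+1-d)
      else min d (4*s+1-d)+1) := rfl

lemma gg_le (s d : ℕ) : gg s d ≤ 2*s+1 := by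
  unfold gg; split_ifs <;> omega

lemma gg_eq_iff (s : ℕ) (d e : ℕ) (hd : d < 4*s+1) (he : e < 4*s+1) :
    gg s d = gg s e ↔ (d = e ∨ (d ≠ 0 ∧ e ≠ 0 ∧ d + e = 4*s+1)) := by
  unfold gg; split_ifs <;> omega

lemma gg_neg (s : ℕ) (x : ZMod (4*s+1)) : gg s (-x).val = gg s x.val := by
  rw [ZMod.neg_val]
  split_ifs with h
  · rw [h]; rfl
  · have hv : x.val < 4*s+1 := ZMod.val_lt x
    have hv0 : x.val ≠ 0 := fun hc => h (veq x 0 (by simpa using hc))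
    rw [gg_eq_iff s _ _ (by omega) hv]
    omega

/-- `gg x.val = gg y.val ↔ y = x ∨ (y = -x ∧ x ≠ 0)`, for use at the ZMod level -/
lemma gg_eq_iff' (s : ℕ) (x y : ZMod (4*s+1)) :
    gg s x.val = gg s y.val ↔ (y = x ∨ (y = -x ∧ x ≠ 0)) := by
  have hx : x.val < 4*s+1 := ZMod.val_lt x
  have hy : y.val < 4*s+1 := ZMod.val_lt y
  rw [gg_eq_iff s _ _ hx hy]
  constructor
  · rintro (h | ⟨h1, h2, h3⟩)
    · exact Or.inl (veq y x h.symm)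
    · refine Or.inr ⟨?_, fun hc => h1 (by simp [hc])⟩
      apply veq
      rw [ZMod.neg_val]
      have : ¬ (x = 0) := fun hc => h1 (by simp [hc])
      simp [this]; omega
  · rintro (rfl | ⟨rfl, hx0⟩)
    · left; rfl
    · right
      have hxv : x.val ≠ 0 := fun hc => hx0 (veq x 0 (by simpa using hc))
      rw [ZMod.neg_val]
      simp [hx0]
      constructor
      · omega
      · omega





/-- offset of player `i` from the pivot in round `m`; `∞` is coded as `i = 4s+1` -/
def off (s m i : ℕ) : ZMod (4*s+1) :=
  if i = 4*s+1 then 0 else (i : ZMod (4*s+1)) - (m : ZMod (4*s+1))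

/-- block index of player `i` in round `m` -/
def blk (s m i : ℕ) : ℕ := gg s (off s m i).val

lemma off_inf (s m : ℕ) : off s m (4*s+1) = 0 := if_pos rfl

lemma off_fin (s m : ℕ) {i : ℕ} (h : i ≠ 4*s+1) :
    off s m i = (i : ZMod (4*s+1)) - (m : ZMod (4*s+1)) := if_neg h


def prt (s m i : ℕ) : ℕ :=
  if i = 4*s+1 then m
  else if (i : ZMod (4*s+1)) = (m : ZMod (4*s+1)) then 4*s+1
  else (2*(m : ZMod (4*s+1)) - (i : ZMod (4*s+1))).val

lemma cast_inj (s : ℕ) {a b : ℕ} (ha : a < 4*s+1) (hb : b < 4*s+1)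
    (h : (a : ZMod (4*s+1)) = b) : a = b := by
  have h1 := ZMod.val_cast_of_lt (n := 4*s+1) ha
  have h2 := ZMod.val_cast_of_lt (n := 4*s+1) hb
  rw [← h2, ← h1]
  exact congrArg ZMod.val h

lemma prt_iff (s m i j : ℕ) (hm : m < 4*s+1) (hi : i < 4*s+2) (hj : j < 4*s+2)
    (hij : i ≠ j) : j = prt s m i ↔ off s m j = - off s m i := by
  by_cases hiN : i = 4*s+1
  · have hjN : j ≠ 4*s+1 := by omega
    subst hiN
    rw [off_inf, off_fin s m hjN, prt, if_pos rfl, neg_zero, sub_eq_zero]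
    constructor
    · rintro rfl; rfl
    · intro h; exact cast_inj s (by omega) hm h
  · rw [prt, if_neg hiN, off_fin s m hiN]
    by_cases him : (i : ZMod (4*s+1)) = (m : ZMod (4*s+1))
    · rw [if_pos him, him, sub_self, neg_zero]
      constructor
      · rintro rfl; rw [off_inf]
      · intro h
        by_cases hjN : j = 4*s+1
        · exact hjN
        · rw [off_fin s m hjN, sub_eq_zero] at h
          have hjm := cast_inj s (by omega) hm h
          have him' := cast_inj s (by omega) hm him
          omega
    · rw [if_neg him]
      have hval : ((2*(m : ZMod (4*s+1)) - (i : ZMod (4*s+1))).val) < 4*s+1 :=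
        ZMod.val_lt _
      constructor
      · rintro rfl
        rw [off_fin s m (by omega), cast_val]
        ring
      · intro h
        by_cases hjN : j = 4*s+1
        · rw [hjN, off_inf] at h
          exfalso; apply him
          have : (i : ZMod (4*s+1)) - m = 0 := by linear_combination h
          rwa [sub_eq_zero] at this
        · rw [off_fin s m hjN] at h
          have hjz : (j : ZMod (4*s+1)) = 2*(m : ZMod (4*s+1)) - i := by
            linear_combination h
          apply cast_inj s (by omega) hval
          rw [hjz, cast_val]

lemma blk_eq_iff (s m i j : ℕ) (hm : m < 4*s+1) (hi : i < 4*s+2) (hj : j < 4*s+2)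
    (hij : i ≠ j) : blk s m i = blk s m j ↔ off s m j = - off s m i := by
  unfold blk
  rw [gg_eq_iff']
  constructor
  · rintro (h | ⟨h, _⟩)
    · have hz : off s m i = 0 := by
        by_contra hne
        have hiN : i ≠ 4*s+1 := by intro hc; apply hne; rw [hc, off_inf]
        have hjN : j ≠ 4*s+1 := by
          intro hc; apply hne; rw [← h, hc, off_inf]
        apply hij
        rw [off_fin s m hiN, off_fin s m hjN, sub_left_inj] at h
        exact cast_inj s (by omega) (by omega) h.symm
      rw [h, hz, neg_zero]
    · exact h
  · intro h
    by_cases hz : off s m i = 0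
    · left; rw [h, hz, neg_zero]
    · right; exact ⟨h, hz⟩

lemma prt_lt (s m i : ℕ) (hm : m < 4*s+1) : prt s m i < 4*s+2 := by
  unfold prt; split_ifs
  · omega
  · omega
  · have := ZMod.val_lt (2*(m : ZMod (4*s+1)) - (i : ZMod (4*s+1))); omega

lemma prt_ne (s m i : ℕ) (hm : m < 4*s+1) (hi : i < 4*s+2) : prt s m i ≠ i := by
  unfold prt; split_ifs with h1 h2
  · omega
  · omega
  · intro hc
    apply h2
    have h0 : (i : ZMod (4*s+1)) = 2*(m : ZMod (4*s+1)) - i := by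
      conv_lhs => rw [← hc, cast_val]
    have h2i : 2*((i : ZMod (4*s+1)) - m) = 0 := by linear_combination h0
    have := two_cancel s _ h2i
    rwa [sub_eq_zero] at this

lemma prt_symm (s m i j : ℕ) (hm : m < 4*s+1) (hi : i < 4*s+2) (hj : j < 4*s+2)
    (hij : i ≠ j) (h : j = prt s m i) : i = prt s m j := by
  rw [prt_iff s m i j hm hi hj hij] at h
  rw [prt_iff s m j i hm hj hi (Ne.symm hij), h, neg_neg]

lemma matched_unique (s : ℕ) (i j : ℕ) (hi : i < 4*s+2) (hj : j < 4*s+2) (hij : i ≠ j) :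
    ∃! m : Fin (4*s+1), off s m.val j = - off s m.val i := by
  rcases eq_or_ne i (4*s+1) with hiN | hiN
  · have hjN : j ≠ 4*s+1 := by omega
    subst hiN
    refine ⟨⟨j, by omega⟩, ?_, ?_⟩
    · show off s j j = - off s j (4*s+1)
      rw [off_inf, off_fin s j hjN, neg_zero, sub_self]
    · intro m hmm
      rw [off_inf, off_fin s m.val hjN, neg_zero, sub_eq_zero] at hmm
      apply Fin.ext
      show m.val = j
      exact (cast_inj s (by omega) m.isLt hmm).symm
  · rcases eq_or_ne j (4*s+1) with hjN | hjN
    · subst hjN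
      refine ⟨⟨i, by omega⟩, ?_, ?_⟩
      · show off s i (4*s+1) = - off s i i
        rw [off_inf, off_fin s i hiN, sub_self, neg_zero]
      · intro m hmm
        rw [off_inf, off_fin s m.val hiN] at hmm
        have h0 : (i : ZMod (4*s+1)) - m.val = 0 := by linear_combination hmm
        rw [sub_eq_zero] at h0
        apply Fin.ext
        show m.val = i
        exact (cast_inj s (by omega) m.isLt h0).symm
    · have hinj : Function.Injective (fun x : ZMod (4*s+1) => 2*x) := by
        intro x y hxy
        simp only at hxy
        have h0 : 2*(x - y) = 0 := by linear_combination hxy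
        have := two_cancel s _ h0
        rwa [sub_eq_zero] at this
      have hsurj : Function.Surjective (fun x : ZMod (4*s+1) => 2*x) :=
        Finite.surjective_of_injective hinj
      obtain ⟨x, hx⟩ := hsurj ((i : ZMod (4*s+1)) + j)
      simp only at hx
      have key : ∀ m : Fin (4*s+1),
          (off s m.val j = - off s m.val i ↔
            2*((m.val : ℕ) : ZMod (4*s+1)) = (i : ZMod (4*s+1)) + j) := by
        intro m
        rw [off_fin s m.val hiN, off_fin s m.val hjN]
        constructor
        · intro h; linear_combination -h
        · intro h; linear_combination -h
      refine ⟨⟨x.val, ZMod.val_lt x⟩, (key _).2 ?_, ?_⟩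
      · show 2*((x.val : ℕ) : ZMod (4*s+1)) = _
        rw [cast_val]; exact hx
      · intro m hmm
        rw [key] at hmm
        apply Fin.ext
        have h1 : ((m.val : ℕ) : ZMod (4*s+1)) = x := hinj (by simp only [hmm, hx])
        have h2 := congrArg ZMod.val h1
        rwa [ZMod.val_cast_of_lt m.isLt] at h2




lemma card_matched (s i j : ℕ) (hi : i < 4*s+2) (hj : j < 4*s+2) (hij : i ≠ j) :
    (univ.filter fun m : Fin (4*s+1) => blk s m.val i = blk s m.val j).card = 1 := by
  obtain ⟨m₀, hm₀, huniq⟩ := matched_unique s i j hi hj hij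
  rw [Finset.card_eq_one]
  refine ⟨m₀, ?_⟩
  ext m
  simp only [mem_filter, mem_univ, true_and, mem_singleton]
  rw [blk_eq_iff s m.val i j m.isLt hi hj hij]
  exact ⟨fun h => huniq m h, fun h => h ▸ hm₀⟩

lemma blk_inf (s m : ℕ) : blk s m (4*s+1) = s+1 := by
  unfold blk
  rw [off_inf, ZMod.val_zero, gg_def]
  simp

lemma card_val_cond (s : ℕ) (P : ℕ → Prop) [DecidablePred P] :
    (univ.filter fun d : Fin (4*s+1) => P d.val).card = ((range (4*s+1)).filter P).card := by
  refine Finset.card_nbij' (fun d => d.val) (fun v => ⟨v % (4*s+1), Nat.mod_lt _ (by omega)⟩)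
    ?_ ?_ ?_ ?_
  · intro d hd
    simp only [Finset.mem_coe, mem_filter, mem_univ, true_and] at hd ⊢
    exact ⟨mem_range.2 d.isLt, hd⟩
  · intro v hv
    simp only [Finset.mem_coe, mem_filter, mem_range, mem_univ, true_and] at hv ⊢
    rw [Nat.mod_eq_of_lt hv.1]
    exact hv.2
  · intro d _
    apply Fin.ext
    show d.val % (4*s+1) = d.val
    exact Nat.mod_eq_of_lt d.isLt
  · intro v hv
    simp only [Finset.mem_coe, mem_filter, mem_range] at hv
    exact Nat.mod_eq_of_lt hv.1

lemma card_off_cond (s j : ℕ) (hj : j < 4*s+1) (P : ℕ → Prop) [DecidablePred P] :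
    (univ.filter fun m : Fin (4*s+1) => P (off s m.val j).val).card =
    (univ.filter fun d : Fin (4*s+1) => P d.val).card := by
  have hjN : j ≠ 4*s+1 := by omega
  refine Finset.card_nbij' (fun m => ⟨(off s m.val j).val, ZMod.val_lt _⟩)
    (fun d => ⟨((j : ZMod (4*s+1)) - ((d.val : ℕ) : ZMod (4*s+1))).val, ZMod.val_lt _⟩)
    ?_ ?_ ?_ ?_
  · intro m hm
    simp only [Finset.mem_coe, mem_filter, mem_univ, true_and] at hm ⊢
    exact hm
  · intro d hd
    simp only [Finset.mem_coe, mem_filter, mem_univ, true_and] at hd ⊢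
    rw [off_fin s _ hjN, cast_val]
    have : (j : ZMod (4*s+1)) - ((j : ZMod (4*s+1)) - d.val) = (d.val : ZMod (4*s+1)) := by ring
    rw [this, ZMod.val_cast_of_lt d.isLt]
    exact hd
  · intro m _
    apply Fin.ext
    show ((j : ZMod (4*s+1)) - (((off s m.val j).val : ℕ) : ZMod (4*s+1))).val = m.val
    rw [cast_val, off_fin s _ hjN]
    have : (j : ZMod (4*s+1)) - ((j : ZMod (4*s+1)) - m.val) = ((m.val : ℕ) : ZMod (4*s+1)) := by
      ring
    rw [this, ZMod.val_cast_of_lt m.isLt]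
  · intro d _
    apply Fin.ext
    show (off s _ j).val = d.val
    rw [off_fin s _ hjN, cast_val]
    have : (j : ZMod (4*s+1)) - ((j : ZMod (4*s+1)) - d.val) = ((d.val : ℕ) : ZMod (4*s+1)) := by
      ring
    rw [this, ZMod.val_cast_of_lt d.isLt]

lemma interval_count1 (s : ℕ) :
    ((range (4*s+1)).filter fun v => gg s v < s+1).card = 2*s := by
  have he : ((range (4*s+1)).filter fun v => gg s v < s+1) =
      Finset.Icc 1 s ∪ Finset.Icc (3*s+1) (4*s) := by
    ext v
    simp only [mem_filter, mem_range, mem_union, Finset.mem_Icc]; rw [gg_def]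
    split_ifs <;> omega
  rw [he, Finset.card_union_of_disjoint, Nat.card_Icc, Nat.card_Icc]
  · omega
  · rw [Finset.disjoint_left]
    intro a ha hb
    simp only [Finset.mem_Icc] at ha hb
    omega

lemma interval_count2 (s : ℕ) :
    ((range (4*s+1)).filter fun v => s+1 < gg s v).card = 2*s := by
  have he : ((range (4*s+1)).filter fun v => s+1 < gg s v) =
      Finset.Icc (s+1) (3*s) := by
    ext v
    simp only [mem_filter, mem_range, Finset.mem_Icc]; rw [gg_def]
    split_ifs <;> omega
  rw [he, Nat.card_Icc]
  omega

lemma balance (s i j : ℕ) (hi : i < 4*s+2) (hj : j < 4*s+2) (hij : i ≠ j) :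
    (univ.filter fun m : Fin (4*s+1) => blk s m.val j < blk s m.val i).card = 2*s := by
  rcases eq_or_ne i (4*s+1) with hiN | hiN
  · subst hiN
    have h1 : (univ.filter fun m : Fin (4*s+1) => blk s m.val j < blk s m.val (4*s+1)) =
        univ.filter fun m : Fin (4*s+1) => gg s (off s m.val j).val < s+1 := by
      apply Finset.filter_congr
      intro m _
      rw [blk_inf]
      rfl
    rw [h1, card_off_cond s j (by omega) (fun v => gg s v < s+1),
      card_val_cond s (fun v => gg s v < s+1), interval_count1]
  · rcases eq_or_ne j (4*s+1) with hjN | hjN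
    · subst hjN
      have h1 : (univ.filter fun m : Fin (4*s+1) => blk s m.val (4*s+1) < blk s m.val i) =
          univ.filter fun m : Fin (4*s+1) => s+1 < gg s (off s m.val i).val := by
        apply Finset.filter_congr
        intro m _
        rw [blk_inf]
        rfl
      rw [h1, card_off_cond s i (by omega) (fun v => s+1 < gg s v),
        card_val_cond s (fun v => s+1 < gg s v), interval_count2]
    · -- both finite: symmetry
      have hilt : i < 4*s+1 := by omega
      have hjlt : j < 4*s+1 := by omega
      set σ : Fin (4*s+1) → Fin (4*s+1) := fun m =>
        ⟨((i : ZMod (4*s+1)) + j - ((m.val : ℕ) : ZMod (4*s+1))).val, ZMod.val_lt _⟩ with hσ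
      have hblk1 : ∀ m : Fin (4*s+1), blk s (σ m).val i = blk s m.val j := by
        intro m
        unfold blk
        rw [off_fin s _ hiN, off_fin s _ hjN]
        have : (i : ZMod (4*s+1)) - ((σ m).val : ℕ) =
            -((j : ZMod (4*s+1)) - ((m.val : ℕ) : ZMod (4*s+1))) := by
          rw [hσ]
          show (i : ZMod (4*s+1)) -
            ((((i : ZMod (4*s+1)) + j - ((m.val : ℕ) : ZMod (4*s+1))).val : ℕ) : ZMod (4*s+1)) = _
          rw [cast_val]
          ring
        rw [this, gg_neg]
      have hblk2 : ∀ m : Fin (4*s+1), blk s (σ m).val j = blk s m.val i := by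
        intro m
        unfold blk
        rw [off_fin s _ hiN, off_fin s _ hjN]
        have : (j : ZMod (4*s+1)) - ((σ m).val : ℕ) =
            -((i : ZMod (4*s+1)) - ((m.val : ℕ) : ZMod (4*s+1))) := by
          rw [hσ]
          show (j : ZMod (4*s+1)) -
            ((((i : ZMod (4*s+1)) + j - ((m.val : ℕ) : ZMod (4*s+1))).val : ℕ) : ZMod (4*s+1)) = _
          rw [cast_val]
          ring
        rw [this, gg_neg]
      have hinv : ∀ m : Fin (4*s+1), σ (σ m) = m := by
        intro m
        apply Fin.ext
        show ((i : ZMod (4*s+1)) + j - (((σ m).val : ℕ) : ZMod (4*s+1))).val = m.val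
        rw [hσ]
        show ((i : ZMod (4*s+1)) + j -
          ((((i : ZMod (4*s+1)) + j - ((m.val : ℕ) : ZMod (4*s+1))).val : ℕ) : ZMod (4*s+1))).val
          = m.val
        rw [cast_val]
        have : (i : ZMod (4*s+1)) + j - ((i : ZMod (4*s+1)) + j - ((m.val : ℕ) : ZMod (4*s+1))) =
            ((m.val : ℕ) : ZMod (4*s+1)) := by ring
        rw [this, ZMod.val_cast_of_lt m.isLt]
      have hAB : (univ.filter fun m : Fin (4*s+1) => blk s m.val j < blk s m.val i).card =
          (univ.filter fun m : Fin (4*s+1) => blk s m.val i < blk s m.val j).card := by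
        refine Finset.card_nbij' σ σ ?_ ?_ ?_ ?_
        · intro m hm
          simp only [Finset.mem_coe, mem_filter, mem_univ, true_and] at hm ⊢
          rw [hblk1, hblk2]
          exact hm
        · intro m hm
          simp only [Finset.mem_coe, mem_filter, mem_univ, true_and] at hm ⊢
          rw [hblk1, hblk2]
          exact hm
        · intro m _; exact hinv m
        · intro m _; exact hinv m
      have hpart : (univ.filter fun m : Fin (4*s+1) => blk s m.val j < blk s m.val i).card +
          ((univ.filter fun m : Fin (4*s+1) => blk s m.val i < blk s m.val j).card +
           (univ.filter fun m : Fin (4*s+1) => blk s m.val i = blk s m.val j).card) = 4*s+1 := by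
        have hneg := Finset.card_filter_add_card_filter_not
          (s := (univ : Finset (Fin (4*s+1)))) (p := fun m => blk s m.val j < blk s m.val i)
        rw [Finset.card_univ, Fintype.card_fin] at hneg
        have hsplit : (univ.filter fun m : Fin (4*s+1) => ¬ (blk s m.val j < blk s m.val i)) =
            (univ.filter fun m : Fin (4*s+1) => blk s m.val i < blk s m.val j) ∪
            (univ.filter fun m : Fin (4*s+1) => blk s m.val i = blk s m.val j) := by
          ext m
          simp only [mem_filter, mem_univ, true_and, mem_union]
          omega
        rw [hsplit, Finset.card_union_of_disjoint] at hneg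
        · exact hneg
        · rw [Finset.disjoint_left]
          intro m hm1 hm2
          simp only [mem_filter] at hm1 hm2
          omega
      rw [card_matched s i j hi hj hij] at hpart
      omega




lemma blk_le (s m i : ℕ) : blk s m i ≤ 2*s+1 := gg_le s _

open scoped Classical in
/-- face value (within a round) of player `i` in round `m` -/
noncomputable def pp (s : ℕ) (T : ℕ → ℕ → Prop) (m i : ℕ) : ℕ :=
  2 * blk s m i + (if T i (prt s m i) then 1 else 0)

lemma pp_lt (s : ℕ) (T : ℕ → ℕ → Prop) (m i : ℕ) : pp s T m i < 8*s+4 := by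
  have := blk_le s m i
  unfold pp
  split_ifs <;> omega

open scoped Classical in
lemma pp_lt_iff (s : ℕ) (T : ℕ → ℕ → Prop)
    (hT : ∀ a b, a < 4*s+2 → b < 4*s+2 → a ≠ b → (T a b ↔ ¬ T b a))
    (m i j : ℕ) (hm : m < 4*s+1) (hi : i < 4*s+2) (hj : j < 4*s+2) (hij : i ≠ j) :
    pp s T m j < pp s T m i ↔
      (blk s m j < blk s m i ∨ (blk s m i = blk s m j ∧ T i j)) := by
  rcases lt_trichotomy (blk s m j) (blk s m i) with hlt | heq | hgt
  · have h1 : pp s T m j < pp s T m i := by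
      unfold pp; split_ifs <;> omega
    simp only [h1, hlt, true_iff, true_or]
  · -- equal blocks: matched pair
    have hprt : j = prt s m i := by
      rw [prt_iff s m i j hm hi hj hij]
      rw [← blk_eq_iff s m i j hm hi hj hij]
      exact heq.symm
    have hprt' : i = prt s m j := prt_symm s m i j hm hi hj hij hprt
    have hTji : T j i ↔ ¬ T i j := hT j i hj hi (Ne.symm hij)
    unfold pp
    rw [← hprt, ← hprt', heq]
    by_cases hTij : T i j
    · have hTji' : ¬ T j i := fun h => (hTji.1 h) hTij
      rw [if_pos hTij, if_neg hTji']
      exact ⟨fun _ => Or.inr ⟨rfl, hTij⟩, fun _ => by omega⟩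
    · have hTji' : T j i := hTji.2 hTij
      rw [if_neg hTij, if_pos hTji']
      constructor
      · intro h; exact absurd h (by omega)
      · rintro (h | ⟨_, h⟩)
        · exact absurd h (by omega)
        · exact absurd h hTij
  · have h1 : ¬ (pp s T m j < pp s T m i) := by
      unfold pp; split_ifs <;> omega
    simp only [h1, false_iff]
    rintro (h | ⟨h, _⟩) <;> omega

open scoped Classical in
lemma M_count (s : ℕ) (T : ℕ → ℕ → Prop)
    (hT : ∀ a b, a < 4*s+2 → b < 4*s+2 → a ≠ b → (T a b ↔ ¬ T b a))
    (i j : ℕ) (hi : i < 4*s+2) (hj : j < 4*s+2) (hij : i ≠ j) :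
    (univ.filter fun m : Fin (4*s+1) => pp s T m.val j < pp s T m.val i).card =
      2*s + (if T i j then 1 else 0) := by
  have hsplit : (univ.filter fun m : Fin (4*s+1) => pp s T m.val j < pp s T m.val i) =
      (univ.filter fun m : Fin (4*s+1) => blk s m.val j < blk s m.val i) ∪
      (univ.filter fun m : Fin (4*s+1) => blk s m.val i = blk s m.val j ∧ T i j) := by
    ext m
    simp only [mem_filter, mem_univ, true_and, mem_union]
    rw [pp_lt_iff s T hT m.val i j m.isLt hi hj hij]
  rw [hsplit, Finset.card_union_of_disjoint, balance s i j hi hj hij]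
  · congr 1
    by_cases hTij : T i j
    · simp only [hTij, and_true, if_pos]
      exact card_matched s i j hi hj hij
    · simp only [hTij, and_false, if_neg, not_false_iff, filter_false, Finset.card_empty]
  · rw [Finset.disjoint_left]
    intro m hm1 hm2
    simp only [mem_filter] at hm1 hm2
    omega

lemma faceWins_eq (k c : ℕ) (f g : ℕ → ℕ) (D E : Fin k → ℕ)
    (hD : ∀ m : Fin k, D m = c * m.val + f m.val)
    (hE : ∀ m : Fin k, E m = c * m.val + g m.val)
    (hf : ∀ v, f v < c) (hg : ∀ v, g v < c) :
    faceWins k D E = (univ.filter fun q : Fin k × Fin k => q.2 < q.1).card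
      + (univ.filter fun m : Fin k => g m.val < f m.val).card := by
  unfold faceWins
  have hsplit : (univ.filter fun p : Fin k × Fin k => D p.1 > E p.2) =
      (univ.filter fun q : Fin k × Fin k => q.2 < q.1) ∪
      (univ.filter fun q : Fin k × Fin k => q.1 = q.2 ∧ g q.1.val < f q.1.val) := by
    ext q
    simp only [mem_filter, mem_univ, true_and, mem_union, gt_iff_lt, hD, hE,
      Fin.lt_def]
    rw [Fin.ext_iff]
    constructor
    · intro h
      rcases lt_trichotomy q.1.val q.2.val with hlt | heq | hgt
      · exfalso
        have h1 : c * (q.1.val + 1) ≤ c * q.2.val := Nat.mul_le_mul le_rfl (by omega)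
        have h2 : c * (q.1.val + 1) = c * q.1.val + c := by ring
        have := hf q.1.val
        have := hg q.2.val
        omega
      · right
        refine ⟨heq, ?_⟩
        rw [← heq] at h
        omega
      · left; exact hgt
    · rintro (h | ⟨h, h2⟩)
      · have h1 : c * (q.2.val + 1) ≤ c * q.1.val := Nat.mul_le_mul le_rfl (by omega)
        have h2' : c * (q.2.val + 1) = c * q.2.val + c := by ring
        have := hf q.1.val
        have := hg q.2.val
        omega
      · rw [h] at h2 ⊢
        omega
  rw [hsplit, Finset.card_union_of_disjoint]
  · congr 1
    refine Finset.card_nbij' (fun q => q.1) (fun m => (m, m)) ?_ ?_ ?_ ?_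
    · intro q hq
      simp only [Finset.mem_coe, mem_filter, mem_univ, true_and] at hq ⊢
      exact hq.2
    · intro m hm
      simp only [Finset.mem_coe, mem_filter, mem_univ, true_and] at hm ⊢
      exact hm
    · intro q hq
      simp only [Finset.mem_coe, mem_filter, mem_univ, true_and] at hq
      exact Prod.ext rfl hq.1
    · intro m _
      rfl
  · rw [Finset.disjoint_left]
    intro q hq1 hq2
    simp only [mem_filter, Fin.lt_def, Fin.ext_iff] at hq1 hq2
    omega

lemma cross_count (k : ℕ) :
    2 * (univ.filter fun q : Fin k × Fin k => q.2 < q.1).card + k = k * k := by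
  have hswap : (univ.filter fun q : Fin k × Fin k => q.2 < q.1).card =
      (univ.filter fun q : Fin k × Fin k => q.1 < q.2).card := by
    refine Finset.card_nbij' (fun q => (q.2, q.1)) (fun q => (q.2, q.1)) ?_ ?_ ?_ ?_
    · intro q hq
      simp only [Finset.mem_coe, mem_filter, mem_univ, true_and] at hq ⊢
      exact hq
    · intro q hq
      simp only [Finset.mem_coe, mem_filter, mem_univ, true_and] at hq ⊢
      exact hq
    · intro q _; rfl
    · intro q _; rfl
  have hdiag : (univ.filter fun q : Fin k × Fin k => q.1 = q.2).card = k := by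
    have : (univ.filter fun q : Fin k × Fin k => q.1 = q.2).card = (univ : Finset (Fin k)).card := by
      refine Finset.card_nbij' (fun q => q.1) (fun m => (m, m)) ?_ ?_ ?_ ?_
      · intro q _; exact mem_univ _
      · intro m _; simp
      · intro q hq
        simp only [Finset.mem_coe, mem_filter, mem_univ, true_and] at hq
        exact Prod.ext rfl hq
      · intro m _; rfl
    rw [this, Finset.card_univ, Fintype.card_fin]
  have hneg := Finset.card_filter_add_card_filter_not
    (s := (univ : Finset (Fin k × Fin k))) (p := fun q => q.2 < q.1)
  rw [Finset.card_univ, Fintype.card_prod, Fintype.card_fin] at hneg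
  have hsplit : (univ.filter fun q : Fin k × Fin k => ¬ (q.2 < q.1)) =
      (univ.filter fun q : Fin k × Fin k => q.1 < q.2) ∪
      (univ.filter fun q : Fin k × Fin k => q.1 = q.2) := by
    ext q
    simp only [mem_filter, mem_univ, true_and, mem_union, Fin.lt_def, Fin.ext_iff]
    omega
  rw [hsplit, Finset.card_union_of_disjoint] at hneg
  · omega
  · rw [Finset.disjoint_left]
    intro q hq1 hq2
    simp only [mem_filter, Fin.lt_def, Fin.ext_iff] at hq1 hq2
    omega


end DiceAux

open DiceAux Finset

/-- For `n ≥ 2` with `n ≡ 2 (mod 4)`, every tournament on `n` vertices is realized by a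
set of `n` dice with `n - 1` sides each. -/
theorem tournament_realized_by_dice_two_mod_four (n : ℕ) (hn : 2 ≤ n) (hmod : n % 4 = 2)
    (T : Fin n → Fin n → Prop)
    (hirr : ∀ i, ¬ T i i)
    (htot : ∀ i j : Fin n, i ≠ j → (T i j ↔ ¬ T j i)) :
    ∃ X : Fin n → Fin (n - 1) → ℕ,
      ∀ i j : Fin n, i ≠ j →
        (T i j ↔ 2 * faceWins (n - 1) (X i) (X j) > (n - 1) ^ 2) := by
  classical
  obtain ⟨s, rfl⟩ : ∃ s, n = 4*s+2 := ⟨n/4, by omega⟩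
  set T' : ℕ → ℕ → Prop :=
    fun a b => ∃ (ha : a < 4*s+2) (hb : b < 4*s+2), T ⟨a, ha⟩ ⟨b, hb⟩ with hT'def
  have hT'iff : ∀ (a b : Fin (4*s+2)), T' a.val b.val ↔ T a b := by
    intro a b
    exact ⟨fun ⟨_, _, h⟩ => h, fun h => ⟨a.isLt, b.isLt, h⟩⟩
  have hT'tot : ∀ a b, a < 4*s+2 → b < 4*s+2 → a ≠ b → (T' a b ↔ ¬ T' b a) := by
    intro a b ha hb hab
    have hne : (⟨a, ha⟩ : Fin (4*s+2)) ≠ ⟨b, hb⟩ := by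
      intro hc; exact hab (congrArg Fin.val hc)
    have h1 : T' a b ↔ T ⟨a, ha⟩ ⟨b, hb⟩ := hT'iff ⟨a, ha⟩ ⟨b, hb⟩
    have h2 : T' b a ↔ T ⟨b, hb⟩ ⟨a, ha⟩ := hT'iff ⟨b, hb⟩ ⟨a, ha⟩
    rw [h1, h2]
    exact htot _ _ hne
  refine ⟨fun i m => (8*s+4) * m.val + pp s T' m.val i.val, ?_⟩
  intro i j hij
  show T i j ↔ 2 * faceWins (4*s+1)
      (fun m : Fin (4*s+1) => (8*s+4) * m.val + pp s T' m.val i.val)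
      (fun m : Fin (4*s+1) => (8*s+4) * m.val + pp s T' m.val j.val) > (4*s+1)^2
  rw [faceWins_eq (4*s+1) (8*s+4) (fun v => pp s T' v i.val) (fun v => pp s T' v j.val)
      _ _ (fun m => rfl) (fun m => rfl)
      (fun v => pp_lt s T' v i.val) (fun v => pp_lt s T' v j.val)]
  have hijv : i.val ≠ j.val := fun hc => hij (Fin.ext hc)
  have hM := M_count s T' hT'tot i.val j.val i.isLt j.isLt hijv
  rw [hM]
  set C := (univ.filter fun q : Fin (4*s+1) × Fin (4*s+1) => q.2 < q.1).card with hCdef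
  have hC := cross_count (4*s+1)
  rw [← hCdef] at hC
  have hpow : (4*s+1)^2 = 2*C + (4*s+1) := by rw [pow_two, ← hC]
  rw [hpow]
  by_cases hT : T i j
  · have hT'ij : T' i.val j.val := (hT'iff i j).2 hT
    rw [if_pos hT'ij]
    exact iff_of_true hT (by omega)
  · have hT'ij : ¬ T' i.val j.val := fun hc => hT ((hT'iff i j).1 hc)
    rw [if_neg hT'ij]
    exact iff_of_false hT (by omega)
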